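/- arXiv:2011.06311 — 2 statements merged into one kernel-verified Lean document; each statement's English description precedes it below -/
import Mathlib

section
/- For every u ∈ k^*, one has β_u ∘ Δ ∘ β_u^{-1} = u^7 Δ as derivations on k[x1,x2,x3]; consequently β_v ∘ φ_u ∘ β_v^{-1} = φ_{u v^7} for all u, v ∈ k^*. -/
open MvPolynomial

noncomputable section

namespace YasudaPaper

variable {k : Type*} [Field k]

/-- `f := x1*x3 - x2^2` (variables: `X 0 = x1, X 1 = x2, X 2 = x3`). -/
def fP : MvPolynomial (Fin 3) k := X 0 * X 2 - X 1 ^ 2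

/-- `r := x2*f + x1^2`. -/
def rP : MvPolynomial (Fin 3) k := X 1 * fP + X 0 ^ 2

/-- `g := x3*f^2 + 2*x1*x2*f + x1^3`. -/
def gP : MvPolynomial (Fin 3) k := X 2 * fP ^ 2 + 2 * X 0 * X 1 * fP + X 0 ^ 3

/-- The Jacobian derivation `Δ = Δ_{(f,g)}`, `h ↦ det ∂(f,g,h)/∂(x1,x2,x3)`. -/
def Del (h : MvPolynomial (Fin 3) k) : MvPolynomial (Fin 3) k :=
  Matrix.det !![pderiv 0 fP, pderiv 1 fP, pderiv 2 fP;
                pderiv 0 gP, pderiv 1 gP, pderiv 2 gP;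
                pderiv 0 h,  pderiv 1 h,  pderiv 2 h]

/-- `φ = exp D`: for every `h` and every `N` with `D^[N] h = 0`,
    `φ h = ∑_{i<N} D^i(h)/i!`.  (For a locally nilpotent `D` this characterizes
    the exponential automorphism.) -/
def IsExpOf {σ : Type*} (D : MvPolynomial σ k → MvPolynomial σ k)
    (φ : MvPolynomial σ k ≃ₐ[k] MvPolynomial σ k) : Prop :=
  ∀ (h : MvPolynomial σ k) (N : ℕ), D^[N] h = 0 →
    φ h = ∑ i ∈ Finset.range N, (Nat.factorial i : k)⁻¹ • D^[i] h

/-- `α` is an affine automorphism: `α(x_i) = ∑_j a_{j,i} x_j + b_i` with `A ∈ GL₃(k)`. -/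
def IsAffine (α : MvPolynomial (Fin 3) k ≃ₐ[k] MvPolynomial (Fin 3) k) : Prop :=
  ∃ (A : Matrix (Fin 3) (Fin 3) k) (b : Fin 3 → k), IsUnit A.det ∧
    ∀ i : Fin 3, α (X i) = (∑ j : Fin 3, C (A j i) * X j) + C (b i)

/-- `Aff_3(k)` as a set of automorphisms. -/
def AffSet : Set (MvPolynomial (Fin 3) k ≃ₐ[k] MvPolynomial (Fin 3) k) := {α | IsAffine α}

/-- `α` is a triangular automorphism: `α(x_i) = a_i x_i + f_i(x_1,…,x_{i-1})`, `a_i ≠ 0`. -/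
def IsTriangular (α : MvPolynomial (Fin 3) k ≃ₐ[k] MvPolynomial (Fin 3) k) : Prop :=
  ∃ (a : Fin 3 → k) (p : Fin 3 → MvPolynomial (Fin 3) k),
    (∀ i, a i ≠ 0) ∧ (∀ i, p i ∈ MvPolynomial.supported k {j | j < i}) ∧
    (∀ i, α (X i) = C (a i) * X i + p i)

/-- `BA_3(k)` as a set of automorphisms. -/
def TriSet : Set (MvPolynomial (Fin 3) k ≃ₐ[k] MvPolynomial (Fin 3) k) := {α | IsTriangular α}

/-- The tame subgroup `TA_3(k) = ⟨Aff_3(k), BA_3(k)⟩`. -/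
def TA : Subgroup (MvPolynomial (Fin 3) k ≃ₐ[k] MvPolynomial (Fin 3) k) :=
  Subgroup.closure (AffSet ∪ TriSet)

/-- `β = β_u = (u^3 x1, u^2 x2, u x3)`. -/
def IsBeta (u : k) (β : MvPolynomial (Fin 3) k ≃ₐ[k] MvPolynomial (Fin 3) k) : Prop :=
  β (X 0) = C (u ^ 3) * X 0 ∧ β (X 1) = C (u ^ 2) * X 1 ∧ β (X 2) = C u * X 2

/-- `B = {β_u | u ∈ k^*}`. -/
def BSet : Set (MvPolynomial (Fin 3) k ≃ₐ[k] MvPolynomial (Fin 3) k) :=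
  {β | ∃ u : k, u ≠ 0 ∧ IsBeta u β}

/-! Six-variable ring `k[x1,x2,x3,t_r,t_f,t_g]`:
variables `X 0 = x1, X 1 = x2, X 2 = x3, X 3 = t_r, X 4 = t_f, X 5 = t_g`. -/

/-- The inclusion of variable index sets. -/
def ι36 : Fin 3 → Fin 6 := Fin.castLE (by norm_num)

/-- The embedding `k[x1,x2,x3] → k[x1,x2,x3,t_r,t_f,t_g]`. -/
def embP : MvPolynomial (Fin 3) k →ₐ[k] MvPolynomial (Fin 6) k := rename ι36

/-- The substitution map `π : t_r ↦ r, t_f ↦ f, t_g ↦ g` (fixing `x1,x2,x3`). -/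
def piMap : MvPolynomial (Fin 6) k →ₐ[k] MvPolynomial (Fin 3) k :=
  aeval ![X 0, X 1, X 2, rP, fP, gP]

/-- The triangular derivation
`Δ' = -2 t_r t_f ∂/∂x1 + (4 x1 t_r - t_g) ∂/∂x2 + (6 x2 t_r + 2 t_f²) ∂/∂x3 - t_f t_g ∂/∂t_r`. -/
def Del' (p : MvPolynomial (Fin 6) k) : MvPolynomial (Fin 6) k :=
  (-(2 * X 3 * X 4)) * pderiv 0 p + (4 * X 0 * X 3 - X 5) * pderiv 1 p +
  (6 * X 1 * X 3 + 2 * X 4 ^ 2) * pderiv 2 p + (-(X 4 * X 5)) * pderiv 3 p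

/-- The weight `w1 = (1,2,3,1,0,1)`. -/
def w1 : Fin 6 → ℕ := ![1, 2, 3, 1, 0, 1]

/-- The weight `w2 = (0,0,0,0,1,0)`. -/
def w2 : Fin 6 → ℕ := ![0, 0, 0, 0, 1, 0]

/-- The sixth cyclic lexicographic order on exponent vectors: first compare the
exponent of `t_g`, then lexicographically the exponents of `x1,x2,x3,t_r,t_f`. -/
def cyclicLt (a b : Fin 6 →₀ ℕ) : Prop :=
  a 5 < b 5 ∨ (a 5 = b 5 ∧ ∃ m : Fin 5,
    (∀ l : Fin 5, l < m → a l.castSucc = b l.castSucc) ∧ a m.castSucc < b m.castSucc)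

/-- The leading monomial of `p` (for the sixth cyclic lexicographic order) is `m`. -/
def LeadMonIs (p : MvPolynomial (Fin 6) k) (m : Fin 6 →₀ ℕ) : Prop :=
  m ∈ p.support ∧ ∀ m' ∈ p.support, m' ≠ m → cyclicLt m' m

/-- The exponent vector of the monomial `t_f^δ t_g^γ`. -/
def tfMon (γ δ : ℕ) : Fin 6 →₀ ℕ := Finsupp.single 4 δ + Finsupp.single 5 γ

/-- The set `P_{γ,δ}`. -/
def Pset (γ δ : ℕ) : Set (MvPolynomial (Fin 6) k) :=
  {p | p ≠ 0 ∧ weightedTotalDegree w1 p ≤ γ ∧ weightedTotalDegree w2 p ≤ δ ∧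
    LeadMonIs p (tfMon γ δ)}

/-- `α'` is a lift of `α`. -/
def IsLift (α : MvPolynomial (Fin 3) k ≃ₐ[k] MvPolynomial (Fin 3) k)
    (α' : MvPolynomial (Fin 6) k →ₐ[k] MvPolynomial (Fin 6) k) : Prop :=
  (∀ i : Fin 3, α' (X (ι36 i)) = embP (α (X i))) ∧
  (∀ p, piMap (α' p) = α (piMap p))

/-- `t = γ_j = max {i | a_{i,j} ≠ 0}` (with rows indexed `1,2,3`). -/
def TypeIs (A : Matrix (Fin 3) (Fin 3) k) (j : Fin 3) (t : ℕ) : Prop :=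
  ∃ i : Fin 3, t = (i : ℕ) + 1 ∧ A i j ≠ 0 ∧ ∀ i' : Fin 3, i < i' → A i' j = 0

/-- Condition (C) for a lift `α'` of an affine automorphism of type `(γ1,γ2,γ3)`,
relative to `φ' = exp(uΔ')`. -/
def CondC (γ1 γ2 γ3 : ℕ) (φ' : MvPolynomial (Fin 6) k ≃ₐ[k] MvPolynomial (Fin 6) k)
    (α' : MvPolynomial (Fin 6) k →ₐ[k] MvPolynomial (Fin 6) k) : Prop :=
  ∃ m4 m5 m6 n4 n5 n6 : ℕ,
    1 ≤ n4 ∧ 1 ≤ n5 ∧ 1 ≤ n6 ∧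
    φ' (α' (X 3)) ∈ Pset m4 n4 ∧
    φ' (α' (X 4)) ∈ Pset m5 n5 ∧
    φ' (α' (X 5)) ∈ Pset m6 n6 ∧
    γ1 ≤ m6 ∧ γ2 ≤ 2 * m6 ∧ γ3 ≤ 3 * m6 ∧ m4 ≤ m6 ∧
    γ1 + 1 ≤ n6 - 1 ∧ γ2 + 1 ≤ 2 * (n6 - 1) ∧ γ3 + 1 ≤ 3 * (n6 - 1) ∧ n4 ≤ n6 - 1

/-- The image of `x_j` under the affine map given by `(A, d)`, inside the six-variable ring. -/
def affImg (A : Matrix (Fin 3) (Fin 3) k) (d : Fin 3 → k) (j : Fin 3) :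
    MvPolynomial (Fin 6) k :=
  (∑ i : Fin 3, C (A i j) * X (ι36 i)) + C (d j)

/-- The image of `t_f` under the lift `α̂`:
`α̂(t_f) = α(f) + (a_{1,1}a_{3,3} - 2a_{1,2}a_{3,2} + a_{1,3}a_{3,1})(t_f - f)`. -/
def hatTf (A : Matrix (Fin 3) (Fin 3) k) (d : Fin 3 → k) : MvPolynomial (Fin 6) k :=
  (affImg A d 0 * affImg A d 2 - affImg A d 1 ^ 2) +
    C (A 0 0 * A 2 2 - 2 * (A 0 1 * A 2 1) + A 0 2 * A 2 0) *
      (X 4 - (X 0 * X 2 - X 1 ^ 2))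

/-- The lift `α̂` of the affine automorphism given by `(A, d)`:
`α̂(x_i) = α(x_i)`, `α̂(t_f)` as in `hatTf`, `α̂(t_r) = α̂(x2 t_f + x1²)`,
`α̂(t_g) = α̂(x3 t_f² + 2 x1 x2 t_f + x1³)`. -/
def hatLift (A : Matrix (Fin 3) (Fin 3) k) (d : Fin 3 → k) :
    MvPolynomial (Fin 6) k →ₐ[k] MvPolynomial (Fin 6) k :=
  aeval ![affImg A d 0, affImg A d 1, affImg A d 2,
    affImg A d 1 * hatTf A d + affImg A d 0 ^ 2,
    hatTf A d,
    affImg A d 2 * hatTf A d ^ 2 + 2 * affImg A d 0 * affImg A d 1 * hatTf A d +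
      affImg A d 0 ^ 3]


theorem Del_mul' (p q : MvPolynomial (Fin 3) k) : Del (p*q) = p * Del q + q * Del p := by
  simp [Del, Matrix.det_fin_three, pderiv_mul]; ring

theorem Del_add' (p q : MvPolynomial (Fin 3) k) : Del (p+q) = Del p + Del q := by
  simp [Del, Matrix.det_fin_three, map_add]; ring

theorem Del_C' (a : k) : Del (C a : MvPolynomial (Fin 3) k) = 0 := by
  simp [Del, Matrix.det_fin_three]

theorem Del_smul' (a : k) (p : MvPolynomial (Fin 3) k) : Del (a • p) = a • Del p := by
  rw [smul_eq_C_mul, Del_mul', Del_C', mul_zero, add_zero, smul_eq_C_mul]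

theorem pderiv_two' (i : Fin 3) : pderiv i (2 : MvPolynomial (Fin 3) k) = 0 := by
  rw [← map_ofNat (C : k →+* MvPolynomial (Fin 3) k) 2, pderiv_C]

theorem beta_Del_X0 (u : k) (β : MvPolynomial (Fin 3) k ≃ₐ[k] MvPolynomial (Fin 3) k)
    (hβ : IsBeta u β) : β (Del (X 0)) = C (u ^ 10) * Del (X 0) := by
  obtain ⟨h0, h1, h2⟩ := hβ
  have hC : ∀ a : k, β (C a) = C a := fun a => by
    rw [← MvPolynomial.algebraMap_eq]; exact β.commutes a
  simp [Del, fP, gP, Matrix.det_fin_three, pderiv_X, pderiv_mul, pderiv_two', map_add,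
    map_sub, map_mul, map_pow, map_ofNat, hC, h0, h1, h2, C_pow]
  ring

theorem beta_Del_X1 (u : k) (β : MvPolynomial (Fin 3) k ≃ₐ[k] MvPolynomial (Fin 3) k)
    (hβ : IsBeta u β) : β (Del (X 1)) = C (u ^ 9) * Del (X 1) := by
  obtain ⟨h0, h1, h2⟩ := hβ
  have hC : ∀ a : k, β (C a) = C a := fun a => by
    rw [← MvPolynomial.algebraMap_eq]; exact β.commutes a
  simp [Del, fP, gP, Matrix.det_fin_three, pderiv_X, pderiv_mul, pderiv_two', map_add,
    map_sub, map_mul, map_pow, map_ofNat, hC, h0, h1, h2, C_pow]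
  ring

theorem beta_Del_X2 (u : k) (β : MvPolynomial (Fin 3) k ≃ₐ[k] MvPolynomial (Fin 3) k)
    (hβ : IsBeta u β) : β (Del (X 2)) = C (u ^ 8) * Del (X 2) := by
  obtain ⟨h0, h1, h2⟩ := hβ
  have hC : ∀ a : k, β (C a) = C a := fun a => by
    rw [← MvPolynomial.algebraMap_eq]; exact β.commutes a
  simp [Del, fP, gP, Matrix.det_fin_three, pderiv_X, pderiv_mul, pderiv_two', map_add,
    map_sub, map_mul, map_pow, map_ofNat, hC, h0, h1, h2, C_pow]
  ring

theorem conj_Del (u : k) (hu : u ≠ 0)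
    (β : MvPolynomial (Fin 3) k ≃ₐ[k] MvPolynomial (Fin 3) k) (hβ : IsBeta u β)
    (p : MvPolynomial (Fin 3) k) : β (Del (β.symm p)) = u ^ 7 • Del p := by
  obtain ⟨h0, h1, h2⟩ := hβ
  have hC : ∀ a : k, β (C a) = C a := fun a => by
    rw [← MvPolynomial.algebraMap_eq]; exact β.commutes a
  have hCs : ∀ a : k, β.symm (C a) = C a := fun a => by
    apply β.injective; rw [AlgEquiv.apply_symm_apply, hC]
  have hs0 : β.symm (X 0) = C ((u ^ 3)⁻¹) * X 0 := by
    apply β.injective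
    rw [AlgEquiv.apply_symm_apply, map_mul, hC, h0, ← mul_assoc, ← C_mul,
      inv_mul_cancel₀ (pow_ne_zero 3 hu), C_1, one_mul]
  have hs1 : β.symm (X 1) = C ((u ^ 2)⁻¹) * X 1 := by
    apply β.injective
    rw [AlgEquiv.apply_symm_apply, map_mul, hC, h1, ← mul_assoc, ← C_mul,
      inv_mul_cancel₀ (pow_ne_zero 2 hu), C_1, one_mul]
  have hs2 : β.symm (X 2) = C u⁻¹ * X 2 := by
    apply β.injective
    rw [AlgEquiv.apply_symm_apply, map_mul, hC, h2, ← mul_assoc, ← C_mul,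
      inv_mul_cancel₀ hu, C_1, one_mul]
  induction p using MvPolynomial.induction_on with
  | C a => rw [hCs, Del_C', map_zero, smul_zero]
  | add p q hp hq => rw [map_add, Del_add', map_add, hp, hq, Del_add', smul_add]
  | mul_X p i hp =>
    have key_i : β (Del (β.symm (X i))) = u ^ 7 • Del (X i) := by
      fin_cases i
      · rw [show (X (⟨0, by norm_num⟩ : Fin 3) : MvPolynomial (Fin 3) k) = X 0 from rfl,
          hs0, Del_mul', Del_C', mul_zero, add_zero, map_mul, hC,
          beta_Del_X0 u β ⟨h0, h1, h2⟩, ← mul_assoc, ← C_mul, smul_eq_C_mul]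
        congr 2
        field_simp
      · rw [show (X (⟨1, by norm_num⟩ : Fin 3) : MvPolynomial (Fin 3) k) = X 1 from rfl,
          hs1, Del_mul', Del_C', mul_zero, add_zero, map_mul, hC,
          beta_Del_X1 u β ⟨h0, h1, h2⟩, ← mul_assoc, ← C_mul, smul_eq_C_mul]
        congr 2
        field_simp
      · rw [show (X (⟨2, by norm_num⟩ : Fin 3) : MvPolynomial (Fin 3) k) = X 2 from rfl,
          hs2, Del_mul', Del_C', mul_zero, add_zero, map_mul, hC,
          beta_Del_X2 u β ⟨h0, h1, h2⟩, ← mul_assoc, ← C_mul, smul_eq_C_mul]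
        congr 2
        field_simp
    rw [map_mul, Del_mul', map_add, map_mul, map_mul, AlgEquiv.apply_symm_apply,
      AlgEquiv.apply_symm_apply, hp, key_i, Del_mul', smul_add, mul_smul_comm,
      mul_smul_comm]

theorem smul_iter (c : k) (n : ℕ) (h : MvPolynomial (Fin 3) k) :
    (fun q => c • Del q)^[n] h = c ^ n • Del^[n] h := by
  induction n with
  | zero => simp
  | succ n ih =>
    rw [Function.iterate_succ_apply', Function.iterate_succ_apply', ih, Del_smul',
      smul_smul, pow_succ]
    ring_nf

theorem conj_iter (v : k) (hv : v ≠ 0)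
    (β : MvPolynomial (Fin 3) k ≃ₐ[k] MvPolynomial (Fin 3) k) (hβ : IsBeta v β)
    (p : MvPolynomial (Fin 3) k) (n : ℕ) :
    β (Del^[n] (β.symm p)) = (v ^ 7) ^ n • Del^[n] p := by
  induction n with
  | zero => simp
  | succ n ih =>
    have hsymm : Del^[n] (β.symm p) = β.symm ((v ^ 7) ^ n • Del^[n] p) := by
      apply β.injective; rw [AlgEquiv.apply_symm_apply, ih]
    rw [Function.iterate_succ_apply', Function.iterate_succ_apply', hsymm,
      conj_Del v hv β hβ, Del_smul', smul_smul]
    congr 1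
    rw [pow_succ]
    ring

/-- For every `u ∈ k^*`, `β_u ∘ Δ ∘ β_u⁻¹ = u^7 Δ`;
consequently `β_v ∘ φ_u ∘ β_v⁻¹ = φ_{u v^7}` for all `u, v ∈ k^*`. -/
theorem statement5 [CharZero k]
    (hln : ∀ h : MvPolynomial (Fin 3) k, ∃ l : ℕ, Del^[l] h = 0) :
    (∀ u : k, u ≠ 0 →
      ∀ β : MvPolynomial (Fin 3) k ≃ₐ[k] MvPolynomial (Fin 3) k, IsBeta u β →
        ∀ p, β (Del (β.symm p)) = u ^ 7 • Del p) ∧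
    (∀ u v : k, u ≠ 0 → v ≠ 0 →
      ∀ β φu φw : MvPolynomial (Fin 3) k ≃ₐ[k] MvPolynomial (Fin 3) k,
        IsBeta v β →
        IsExpOf (fun h => u • Del h) φu →
        IsExpOf (fun h => (u * v ^ 7) • Del h) φw →
        ∀ p, β (φu (β.symm p)) = φw p) := by
  constructor
  · exact fun u hu β hβ p => conj_Del u hu β hβ p
  · intro u v hu hv β φu φw hβ hφu hφw p
    obtain ⟨N, hN⟩ := hln (β.symm p)
    have hDelN : Del^[N] p = 0 := by
      have h1 := conj_iter v hv β hβ p N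
      rw [hN, map_zero] at h1
      have hne : ((v ^ 7) ^ N : k) ≠ 0 := pow_ne_zero _ (pow_ne_zero _ hv)
      have := congrArg (fun q => ((v ^ 7) ^ N : k)⁻¹ • q) h1
      simpa [smul_smul, inv_mul_cancel₀ hne] using this.symm
    have hφu' := hφu (β.symm p) N (by rw [smul_iter, hN, smul_zero])
    have hφw' := hφw p N (by rw [smul_iter, hDelN, smul_zero])
    rw [hφu', map_sum, hφw']
    refine Finset.sum_congr rfl fun i _ => ?_
    rw [smul_iter, smul_iter, map_smul, map_smul, conj_iter v hv β hβ,
      smul_smul, smul_smul, smul_smul]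
    congr 1
    rw [mul_pow]
    ring

end YasudaPaper
end
end

section
/- For every u ∈ k^*: φ'_u(t_r) = t_r - u*t_f*t_g, φ'_u(t_f) = t_f, φ'_u(t_g) = t_g, and for each i = 1,2,3 one has φ'_u(x_i) ∈ P_{i, i+1} with leading term lt(φ'_u(x_i)) = (-1)^{i+1} u^{2i} t_f^{i+1} t_g^{i} for the sixth cyclic lexicographic order. -/
open MvPolynomial

noncomputable section

namespace YasudaPaper

variable {k : Type*} [Field k]

/-! ### Auxiliary machinery for Statement 9 -/

/-- Convenient constructor for exponent vectors in `Fin 6 →₀ ℕ`. -/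
noncomputable def mn (a b c d e f : ℕ) : Fin 6 →₀ ℕ :=
  Finsupp.single 0 a + Finsupp.single 1 b + Finsupp.single 2 c + Finsupp.single 3 d +
    Finsupp.single 4 e + Finsupp.single 5 f

lemma mn_apply5 (a b c d e f : ℕ) : mn a b c d e f 5 = f := by
  simp [mn, Finsupp.single_apply]

lemma mn_ne {a b c d e f a' b' c' d' e' f' : ℕ} (h : f ≠ f') :
    mn a b c d e f ≠ mn a' b' c' d' e' f' := fun heq => h (by
  have := DFunLike.congr_fun heq (5 : Fin 6)
  simpa [mn_apply5] using this)

lemma tfMon_mn (γ δ : ℕ) : tfMon γ δ = mn 0 0 0 0 δ γ := by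
  simp [tfMon, mn]

lemma tfMon_apply5 (γ δ : ℕ) : tfMon γ δ 5 = γ := by
  rw [tfMon_mn]; exact mn_apply5 _ _ _ _ _ _

lemma weight_mn (w : Fin 6 → ℕ) (a b c d e f : ℕ) :
    Finsupp.weight w (mn a b c d e f) =
      a * w 0 + b * w 1 + c * w 2 + d * w 3 + e * w 4 + f * w 5 := by
  simp [mn, map_add, Finsupp.weight_apply, Finsupp.sum_single_index]

lemma monomial_mn (r : k) (a b c d e f : ℕ) :
    monomial (mn a b c d e f) r =
      C r * X 0 ^ a * X 1 ^ b * X 2 ^ c * X 3 ^ d * X 4 ^ e * X 5 ^ f := by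
  simp [mn, X_pow_eq_monomial, monomial_mul, C_mul_monomial]

lemma supp_chain {p : MvPolynomial (Fin 6) k} {s : Finset (Fin 6 →₀ ℕ)}
    (m : Fin 6 →₀ ℕ) (c : k) (hq : p.support ⊆ s) :
    (monomial m c + p).support ⊆ insert m s :=
  support_add.trans (Finset.union_subset
    (support_monomial_subset.trans (Finset.singleton_subset_iff.mpr (Finset.mem_insert_self _ _)))
    (hq.trans (Finset.subset_insert _ _)))

lemma fact_cancel [CharZero k] (n : ℕ) (p : MvPolynomial (Fin 6) k) :
    ((n.factorial : k))⁻¹ • (((n.factorial : k)) • p) = p := by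
  rw [smul_smul, inv_mul_cancel₀ (Nat.cast_ne_zero.mpr n.factorial_ne_zero), one_smul]

lemma pderiv_ofNat (i : Fin 6) (n : ℕ) [n.AtLeastTwo] :
    pderiv i (no_index (OfNat.ofNat n) : MvPolynomial (Fin 6) k) = 0 := by
  rw [← map_ofNat (C : k →+* MvPolynomial (Fin 6) k) n, pderiv_C]

lemma Del'_smul (c : k) (p : MvPolynomial (Fin 6) k) : Del' (c • p) = c • Del' p := by
  simp only [smul_eq_C_mul, Del', pderiv_C_mul]; ring

lemma iter_step {u : k} {p q x : MvPolynomial (Fin 6) k} (n : ℕ)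
    (h : (fun p => u • Del' p)^[n] x = (n.factorial : k) • p)
    (hstep : u • Del' p = ((n + 1 : ℕ) : k) • q) :
    (fun p => u • Del' p)^[n + 1] x = ((n + 1).factorial : k) • q := by
  rw [Function.iterate_succ_apply', h]
  show u • Del' ((n.factorial : k) • p) = _
  rw [Del'_smul, smul_comm u (n.factorial : k), hstep, smul_smul]
  congr 1
  push_cast [Nat.factorial_succ]
  ring

lemma iter_step_zero {u : k} {p x : MvPolynomial (Fin 6) k} (n : ℕ)
    (h : (fun p => u • Del' p)^[n] x = (n.factorial : k) • p)
    (hz : Del' p = 0) : (fun p => u • Del' p)^[n + 1] x = 0 := by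
  rw [Function.iterate_succ_apply', h]
  show u • Del' ((n.factorial : k) • p) = _
  rw [Del'_smul, hz, smul_zero, smul_zero]

lemma Pset_intro {γ δ : ℕ} {p : MvPolynomial (Fin 6) k} {S : Finset (Fin 6 →₀ ℕ)}
    (hsupp : p.support ⊆ insert (tfMon γ δ) S)
    (hc : coeff (tfMon γ δ) p ≠ 0)
    (hS : ∀ m ∈ S, Finsupp.weight w1 m ≤ γ ∧ Finsupp.weight w2 m ≤ δ ∧ m 5 < γ)
    (hγδ : Finsupp.weight w1 (tfMon γ δ) ≤ γ ∧ Finsupp.weight w2 (tfMon γ δ) ≤ δ) :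
    p ∈ Pset γ δ := by
  refine ⟨fun h0 => hc (by simp [h0]), ?_, ?_, mem_support_iff.mpr hc, ?_⟩
  · refine Finset.sup_le fun m hm => ?_
    rcases Finset.mem_insert.mp (hsupp hm) with rfl | hm'
    · exact hγδ.1
    · exact (hS m hm').1
  · refine Finset.sup_le fun m hm => ?_
    rcases Finset.mem_insert.mp (hsupp hm) with rfl | hm'
    · exact hγδ.2
    · exact (hS m hm').2.1
  · intro m' hm' hne
    rcases Finset.mem_insert.mp (hsupp hm') with rfl | hm''
    · exact absurd rfl hne
    · exact Or.inl (by rw [tfMon_apply5]; exact (hS m' hm'').2.2)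


lemma x0_val [CharZero k] (u : k)
    (φ' : MvPolynomial (Fin 6) k ≃ₐ[k] MvPolynomial (Fin 6) k)
    (hφ' : IsExpOf (fun p => u • Del' p) φ') :
    φ' (X 0) = monomial (tfMon 1 2) (u ^ 2) +
      (monomial (mn 1 0 0 0 0 0) 1 + monomial (mn 0 0 0 1 1 0) (-(2 * u))) := by
  have h0 : (fun p => u • Del' p)^[0] (X 0 : MvPolynomial (Fin 6) k)
      = ((Nat.factorial 0 : ℕ) : k) • X 0 := by simp
  have hs1 : u • Del' (X 0 : MvPolynomial (Fin 6) k)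
      = ((0 + 1 : ℕ) : k) • (C u * (-(2 * X 3 * X 4))) := by
    simp [Del', pderiv_X, smul_eq_C_mul]
    try ring
  have h1 := iter_step 0 h0 hs1
  have hs2 : u • Del' (C u * (-(2 * X 3 * X 4)) : MvPolynomial (Fin 6) k)
      = ((1 + 1 : ℕ) : k) • (C u ^ 2 * (X 4 ^ 2 * X 5)) := by
    simp [Del', pderiv_X, pderiv_mul, pderiv_pow, pderiv_C, pderiv_ofNat, smul_eq_C_mul,
      map_ofNat, Nat.cast_ofNat]
    try ring
  have h2 := iter_step 1 h1 hs2
  have hz : Del' (C u ^ 2 * (X 4 ^ 2 * X 5) : MvPolynomial (Fin 6) k) = 0 := by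
    simp [Del', pderiv_X, pderiv_mul, pderiv_pow, pderiv_C, pderiv_ofNat]
  have h3 := iter_step_zero 2 h2 hz
  rw [hφ' _ 3 h3, Finset.sum_range_succ, Finset.sum_range_succ, Finset.sum_range_one,
    h0, h1, h2]
  simp only [fact_cancel]
  simp only [tfMon_mn, monomial_mn, map_mul, map_pow, map_neg, map_ofNat, map_one]
  try ring


lemma x0_spec [CharZero k] (u : k) (hu : u ≠ 0)
    (φ' : MvPolynomial (Fin 6) k ≃ₐ[k] MvPolynomial (Fin 6) k)
    (hφ' : IsExpOf (fun p => u • Del' p) φ') :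
    φ' (X 0) ∈ Pset 1 2 ∧ coeff (tfMon 1 2) (φ' (X 0)) = u ^ 2 := by
  rw [x0_val u φ' hφ']
  have hne1 : mn 1 0 0 0 0 0 ≠ mn 0 0 0 0 2 1 := mn_ne (by norm_num)
  have hne2 : mn 0 0 0 1 1 0 ≠ mn 0 0 0 0 2 1 := mn_ne (by norm_num)
  have hc : coeff (tfMon 1 2) (monomial (tfMon 1 2) (u ^ 2) +
      (monomial (mn 1 0 0 0 0 0) (1:k) + monomial (mn 0 0 0 1 1 0) (-(2 * u)))) = u ^ 2 := by
    rw [tfMon_mn]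
    simp [coeff_monomial, hne1, hne2, Ne.symm hne1, Ne.symm hne2]
  refine ⟨Pset_intro (S := {mn 1 0 0 0 0 0, mn 0 0 0 1 1 0}) ?_ (by rw [hc]; exact pow_ne_zero _ hu) ?_ ?_, hc⟩
  · exact supp_chain _ _ (supp_chain _ _ support_monomial_subset)
  · intro m hm
    simp only [Finset.mem_insert, Finset.mem_singleton] at hm
    rcases hm with rfl | rfl
    all_goals exact ⟨by rw [weight_mn]; decide, by rw [weight_mn]; decide,
      by rw [mn_apply5]; decide⟩
  · exact ⟨by rw [tfMon_mn, weight_mn]; decide, by rw [tfMon_mn, weight_mn]; decide⟩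


lemma x1_val [CharZero k] (u : k)
    (φ' : MvPolynomial (Fin 6) k ≃ₐ[k] MvPolynomial (Fin 6) k)
    (hφ' : IsExpOf (fun p => u • Del' p) φ') :
    φ' (X 1) = monomial (tfMon 2 3) (-(u ^ 4)) +
      (monomial (mn 0 1 0 0 0 0) 1 + (monomial (mn 1 0 0 1 0 0) (4 * u) +
      (monomial (mn 0 0 0 0 0 1) (-u) + (monomial (mn 0 0 0 2 1 0) (-(4 * u ^ 2)) +
      (monomial (mn 1 0 0 0 1 1) (-(2 * u ^ 2)) + monomial (mn 0 0 0 1 2 1) (4 * u ^ 3)))))) := by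
  have h0 : (fun p => u • Del' p)^[0] (X 1 : MvPolynomial (Fin 6) k)
      = ((Nat.factorial 0 : ℕ) : k) • X 1 := by simp
  have hs1 : u • Del' (X 1 : MvPolynomial (Fin 6) k)
      = ((0 + 1 : ℕ) : k) • (C u * (4 * X 0 * X 3 - X 5)) := by
    simp [Del', pderiv_X, pderiv_mul, pderiv_pow, pderiv_C, pderiv_ofNat, smul_eq_C_mul,
      map_ofNat, Nat.cast_ofNat]
    try ring
  have h1 := iter_step 0 h0 hs1
  have hs2 : u • Del' (C u * (4 * X 0 * X 3 - X 5) : MvPolynomial (Fin 6) k)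
      = ((1 + 1 : ℕ) : k) • (C u ^ 2 * (-(4 * X 3 ^ 2 * X 4) - 2 * X 0 * X 4 * X 5)) := by
    simp [Del', pderiv_X, pderiv_mul, pderiv_pow, pderiv_C, pderiv_ofNat, smul_eq_C_mul,
      map_ofNat, Nat.cast_ofNat]
    try ring
  have h2 := iter_step 1 h1 hs2
  have hs3 : u • Del' (C u ^ 2 * (-(4 * X 3 ^ 2 * X 4) - 2 * X 0 * X 4 * X 5) :
      MvPolynomial (Fin 6) k)
      = ((2 + 1 : ℕ) : k) • (C u ^ 3 * (4 * X 3 * X 4 ^ 2 * X 5)) := by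
    simp [Del', pderiv_X, pderiv_mul, pderiv_pow, pderiv_C, pderiv_ofNat, smul_eq_C_mul,
      map_ofNat, Nat.cast_ofNat]
    try ring
  have h3 := iter_step 2 h2 hs3
  have hs4 : u • Del' (C u ^ 3 * (4 * X 3 * X 4 ^ 2 * X 5) : MvPolynomial (Fin 6) k)
      = ((3 + 1 : ℕ) : k) • (C u ^ 4 * (-(X 4 ^ 3 * X 5 ^ 2))) := by
    simp [Del', pderiv_X, pderiv_mul, pderiv_pow, pderiv_C, pderiv_ofNat, smul_eq_C_mul,
      map_ofNat, Nat.cast_ofNat]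
    try ring
  have h4 := iter_step 3 h3 hs4
  have hz : Del' (C u ^ 4 * (-(X 4 ^ 3 * X 5 ^ 2)) : MvPolynomial (Fin 6) k) = 0 := by
    simp [Del', pderiv_X, pderiv_mul, pderiv_pow, pderiv_C, pderiv_ofNat]
  have h5 := iter_step_zero 4 h4 hz
  rw [hφ' _ 5 h5, Finset.sum_range_succ, Finset.sum_range_succ, Finset.sum_range_succ,
    Finset.sum_range_succ, Finset.sum_range_one, h0, h1, h2, h3, h4]
  simp only [fact_cancel]
  simp only [tfMon_mn, monomial_mn, map_mul, map_pow, map_neg, map_ofNat, map_one]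
  try ring

lemma x1_spec [CharZero k] (u : k) (hu : u ≠ 0)
    (φ' : MvPolynomial (Fin 6) k ≃ₐ[k] MvPolynomial (Fin 6) k)
    (hφ' : IsExpOf (fun p => u • Del' p) φ') :
    φ' (X 1) ∈ Pset 2 3 ∧ coeff (tfMon 2 3) (φ' (X 1)) = -(u ^ 4) := by
  rw [x1_val u φ' hφ']
  have hne1 : mn 0 1 0 0 0 0 ≠ mn 0 0 0 0 3 2 := mn_ne (by norm_num)
  have hne2 : mn 1 0 0 1 0 0 ≠ mn 0 0 0 0 3 2 := mn_ne (by norm_num)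
  have hne3 : mn 0 0 0 0 0 1 ≠ mn 0 0 0 0 3 2 := mn_ne (by norm_num)
  have hne4 : mn 0 0 0 2 1 0 ≠ mn 0 0 0 0 3 2 := mn_ne (by norm_num)
  have hne5 : mn 1 0 0 0 1 1 ≠ mn 0 0 0 0 3 2 := mn_ne (by norm_num)
  have hne6 : mn 0 0 0 1 2 1 ≠ mn 0 0 0 0 3 2 := mn_ne (by norm_num)
  have hc : coeff (tfMon 2 3) (monomial (tfMon 2 3) (-(u ^ 4)) +
      (monomial (mn 0 1 0 0 0 0) (1:k) + (monomial (mn 1 0 0 1 0 0) (4 * u) +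
      (monomial (mn 0 0 0 0 0 1) (-u) + (monomial (mn 0 0 0 2 1 0) (-(4 * u ^ 2)) +
      (monomial (mn 1 0 0 0 1 1) (-(2 * u ^ 2)) + monomial (mn 0 0 0 1 2 1) (4 * u ^ 3)))))))
      = -(u ^ 4) := by
    rw [tfMon_mn]
    simp [coeff_monomial, hne1, hne2, hne3, hne4, hne5, hne6,
      Ne.symm hne1, Ne.symm hne2, Ne.symm hne3, Ne.symm hne4, Ne.symm hne5, Ne.symm hne6]
  refine ⟨Pset_intro (S := {mn 0 1 0 0 0 0, mn 1 0 0 1 0 0, mn 0 0 0 0 0 1, mn 0 0 0 2 1 0,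
      mn 1 0 0 0 1 1, mn 0 0 0 1 2 1})
    ?_ (by rw [hc]; exact neg_ne_zero.mpr (pow_ne_zero _ hu)) ?_ ?_, hc⟩
  · exact supp_chain _ _ (supp_chain _ _ (supp_chain _ _ (supp_chain _ _ (supp_chain _ _
      (supp_chain _ _ support_monomial_subset)))))
  · intro m hm
    simp only [Finset.mem_insert, Finset.mem_singleton] at hm
    rcases hm with rfl | rfl | rfl | rfl | rfl | rfl
    all_goals exact ⟨by rw [weight_mn]; decide, by rw [weight_mn]; decide,
      by rw [mn_apply5]; decide⟩
  · exact ⟨by rw [tfMon_mn, weight_mn]; decide, by rw [tfMon_mn, weight_mn]; decide⟩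


set_option maxHeartbeats 2000000 in
lemma x2_val [CharZero k] (u : k)
    (φ' : MvPolynomial (Fin 6) k ≃ₐ[k] MvPolynomial (Fin 6) k)
    (hφ' : IsExpOf (fun p => u • Del' p) φ') :
    φ' (X 2) = monomial (tfMon 3 4) (u ^ 6) +
      (monomial (mn 0 0 1 0 0 0) 1 + (monomial (mn 0 1 0 1 0 0) (6 * u) +
      (monomial (mn 0 0 0 0 2 0) (2 * u) + (monomial (mn 1 0 0 2 0 0) (12 * u ^ 2) +
      (monomial (mn 0 0 0 1 0 1) (-(3 * u ^ 2)) + (monomial (mn 0 1 0 0 1 1) (-(3 * u ^ 2)) +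
      (monomial (mn 0 0 0 3 1 0) (-(8 * u ^ 3)) + (monomial (mn 1 0 0 1 1 1) (-(12 * u ^ 3)) +
      (monomial (mn 0 0 0 0 1 2) (2 * u ^ 3) + (monomial (mn 1 0 0 0 2 2) (3 * u ^ 4) +
      (monomial (mn 0 0 0 2 2 1) (12 * u ^ 4) +
       monomial (mn 0 0 0 1 3 2) (-(6 * u ^ 5))))))))))))) := by
  have h0 : (fun p => u • Del' p)^[0] (X 2 : MvPolynomial (Fin 6) k)
      = ((Nat.factorial 0 : ℕ) : k) • X 2 := by simp
  have hs1 : u • Del' (X 2 : MvPolynomial (Fin 6) k)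
      = ((0 + 1 : ℕ) : k) • (C u * (6 * X 1 * X 3 + 2 * X 4 ^ 2)) := by
    simp [Del', pderiv_X, pderiv_mul, pderiv_pow, pderiv_C, pderiv_ofNat, smul_eq_C_mul,
      map_ofNat, Nat.cast_ofNat]
    try ring
  have h1 := iter_step 0 h0 hs1
  have hs2 : u • Del' (C u * (6 * X 1 * X 3 + 2 * X 4 ^ 2) : MvPolynomial (Fin 6) k)
      = ((1 + 1 : ℕ) : k) • (C u ^ 2 *
        (12 * X 0 * X 3 ^ 2 - 3 * X 3 * X 5 - 3 * X 1 * X 4 * X 5)) := by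
    simp [Del', pderiv_X, pderiv_mul, pderiv_pow, pderiv_C, pderiv_ofNat, smul_eq_C_mul,
      map_ofNat, Nat.cast_ofNat]
    try ring
  have h2 := iter_step 1 h1 hs2
  have hs3 : u • Del' (C u ^ 2 * (12 * X 0 * X 3 ^ 2 - 3 * X 3 * X 5 - 3 * X 1 * X 4 * X 5) :
      MvPolynomial (Fin 6) k)
      = ((2 + 1 : ℕ) : k) • (C u ^ 3 *
        (2 * X 4 * X 5 ^ 2 - 8 * X 3 ^ 3 * X 4 - 12 * X 0 * X 3 * X 4 * X 5)) := by
    simp [Del', pderiv_X, pderiv_mul, pderiv_pow, pderiv_C, pderiv_ofNat, smul_eq_C_mul,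
      map_ofNat, Nat.cast_ofNat]
    try ring
  have h3 := iter_step 2 h2 hs3
  have hs4 : u • Del' (C u ^ 3 *
      (2 * X 4 * X 5 ^ 2 - 8 * X 3 ^ 3 * X 4 - 12 * X 0 * X 3 * X 4 * X 5) :
      MvPolynomial (Fin 6) k)
      = ((3 + 1 : ℕ) : k) • (C u ^ 4 *
        (12 * X 3 ^ 2 * X 4 ^ 2 * X 5 + 3 * X 0 * X 4 ^ 2 * X 5 ^ 2)) := by
    simp [Del', pderiv_X, pderiv_mul, pderiv_pow, pderiv_C, pderiv_ofNat, smul_eq_C_mul,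
      map_ofNat, Nat.cast_ofNat]
    try ring
  have h4 := iter_step 3 h3 hs4
  have hs5 : u • Del' (C u ^ 4 * (12 * X 3 ^ 2 * X 4 ^ 2 * X 5 + 3 * X 0 * X 4 ^ 2 * X 5 ^ 2) :
      MvPolynomial (Fin 6) k)
      = ((4 + 1 : ℕ) : k) • (C u ^ 5 * (-(6 * X 3 * X 4 ^ 3 * X 5 ^ 2))) := by
    simp [Del', pderiv_X, pderiv_mul, pderiv_pow, pderiv_C, pderiv_ofNat, smul_eq_C_mul,
      map_ofNat, Nat.cast_ofNat]
    try ring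
  have h5 := iter_step 4 h4 hs5
  have hs6 : u • Del' (C u ^ 5 * (-(6 * X 3 * X 4 ^ 3 * X 5 ^ 2)) : MvPolynomial (Fin 6) k)
      = ((5 + 1 : ℕ) : k) • (C u ^ 6 * (X 4 ^ 4 * X 5 ^ 3)) := by
    simp [Del', pderiv_X, pderiv_mul, pderiv_pow, pderiv_C, pderiv_ofNat, smul_eq_C_mul,
      map_ofNat, Nat.cast_ofNat]
    try ring
  have h6 := iter_step 5 h5 hs6
  have hz : Del' (C u ^ 6 * (X 4 ^ 4 * X 5 ^ 3) : MvPolynomial (Fin 6) k) = 0 := by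
    simp [Del', pderiv_X, pderiv_mul, pderiv_pow, pderiv_C, pderiv_ofNat]
  have h7 := iter_step_zero 6 h6 hz
  rw [hφ' _ 7 h7, Finset.sum_range_succ, Finset.sum_range_succ, Finset.sum_range_succ,
    Finset.sum_range_succ, Finset.sum_range_succ, Finset.sum_range_succ, Finset.sum_range_one,
    h0, h1, h2, h3, h4, h5, h6]
  simp only [fact_cancel]
  simp only [tfMon_mn, monomial_mn, map_mul, map_pow, map_neg, map_ofNat, map_one]
  try ring

set_option maxHeartbeats 2000000 in
lemma x2_spec [CharZero k] (u : k) (hu : u ≠ 0)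
    (φ' : MvPolynomial (Fin 6) k ≃ₐ[k] MvPolynomial (Fin 6) k)
    (hφ' : IsExpOf (fun p => u • Del' p) φ') :
    φ' (X 2) ∈ Pset 3 4 ∧ coeff (tfMon 3 4) (φ' (X 2)) = u ^ 6 := by
  rw [x2_val u φ' hφ']
  have hne1 : mn 0 0 1 0 0 0 ≠ mn 0 0 0 0 4 3 := mn_ne (by norm_num)
  have hne2 : mn 0 1 0 1 0 0 ≠ mn 0 0 0 0 4 3 := mn_ne (by norm_num)
  have hne3 : mn 0 0 0 0 2 0 ≠ mn 0 0 0 0 4 3 := mn_ne (by norm_num)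
  have hne4 : mn 1 0 0 2 0 0 ≠ mn 0 0 0 0 4 3 := mn_ne (by norm_num)
  have hne5 : mn 0 0 0 1 0 1 ≠ mn 0 0 0 0 4 3 := mn_ne (by norm_num)
  have hne6 : mn 0 1 0 0 1 1 ≠ mn 0 0 0 0 4 3 := mn_ne (by norm_num)
  have hne7 : mn 0 0 0 3 1 0 ≠ mn 0 0 0 0 4 3 := mn_ne (by norm_num)
  have hne8 : mn 1 0 0 1 1 1 ≠ mn 0 0 0 0 4 3 := mn_ne (by norm_num)
  have hne9 : mn 0 0 0 0 1 2 ≠ mn 0 0 0 0 4 3 := mn_ne (by norm_num)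
  have hne10 : mn 1 0 0 0 2 2 ≠ mn 0 0 0 0 4 3 := mn_ne (by norm_num)
  have hne11 : mn 0 0 0 2 2 1 ≠ mn 0 0 0 0 4 3 := mn_ne (by norm_num)
  have hne12 : mn 0 0 0 1 3 2 ≠ mn 0 0 0 0 4 3 := mn_ne (by norm_num)
  have hc : coeff (tfMon 3 4) (monomial (tfMon 3 4) (u ^ 6) +
      (monomial (mn 0 0 1 0 0 0) (1:k) + (monomial (mn 0 1 0 1 0 0) (6 * u) +
      (monomial (mn 0 0 0 0 2 0) (2 * u) + (monomial (mn 1 0 0 2 0 0) (12 * u ^ 2) +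
      (monomial (mn 0 0 0 1 0 1) (-(3 * u ^ 2)) + (monomial (mn 0 1 0 0 1 1) (-(3 * u ^ 2)) +
      (monomial (mn 0 0 0 3 1 0) (-(8 * u ^ 3)) + (monomial (mn 1 0 0 1 1 1) (-(12 * u ^ 3)) +
      (monomial (mn 0 0 0 0 1 2) (2 * u ^ 3) + (monomial (mn 1 0 0 0 2 2) (3 * u ^ 4) +
      (monomial (mn 0 0 0 2 2 1) (12 * u ^ 4) +
       monomial (mn 0 0 0 1 3 2) (-(6 * u ^ 5)))))))))))))) = u ^ 6 := by
    rw [tfMon_mn]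
    simp [coeff_monomial, hne1, hne2, hne3, hne4, hne5, hne6, hne7, hne8, hne9, hne10,
      hne11, hne12, Ne.symm hne1, Ne.symm hne2, Ne.symm hne3, Ne.symm hne4, Ne.symm hne5,
      Ne.symm hne6, Ne.symm hne7, Ne.symm hne8, Ne.symm hne9, Ne.symm hne10, Ne.symm hne11,
      Ne.symm hne12]
  refine ⟨Pset_intro (S := {mn 0 0 1 0 0 0, mn 0 1 0 1 0 0, mn 0 0 0 0 2 0, mn 1 0 0 2 0 0,
      mn 0 0 0 1 0 1, mn 0 1 0 0 1 1, mn 0 0 0 3 1 0, mn 1 0 0 1 1 1, mn 0 0 0 0 1 2,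
      mn 1 0 0 0 2 2, mn 0 0 0 2 2 1, mn 0 0 0 1 3 2})
    ?_ (by rw [hc]; exact pow_ne_zero _ hu) ?_ ?_, hc⟩
  · exact supp_chain _ _ (supp_chain _ _ (supp_chain _ _ (supp_chain _ _ (supp_chain _ _
      (supp_chain _ _ (supp_chain _ _ (supp_chain _ _ (supp_chain _ _ (supp_chain _ _
      (supp_chain _ _ (supp_chain _ _ support_monomial_subset)))))))))))
  · intro m hm
    simp only [Finset.mem_insert, Finset.mem_singleton] at hm
    rcases hm with rfl | rfl | rfl | rfl | rfl | rfl | rfl | rfl | rfl | rfl | rfl | rfl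
    all_goals exact ⟨by rw [weight_mn]; decide, by rw [weight_mn]; decide,
      by rw [mn_apply5]; decide⟩
  · exact ⟨by rw [tfMon_mn, weight_mn]; decide, by rw [tfMon_mn, weight_mn]; decide⟩


/-- `φ'_u(t_r) = t_r - u t_f t_g`, `φ'_u(t_f) = t_f`,
`φ'_u(t_g) = t_g`, and `φ'_u(x_i) ∈ P_{i,i+1}` with leading term
`(-1)^{i+1} u^{2i} t_f^{i+1} t_g^i` for `i = 1,2,3`. -/
theorem statement9 [CharZero k]
    (hln6 : ∀ p : MvPolynomial (Fin 6) k, ∃ l : ℕ, Del'^[l] p = 0)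
    (u : k) (hu : u ≠ 0)
    (φ' : MvPolynomial (Fin 6) k ≃ₐ[k] MvPolynomial (Fin 6) k)
    (hφ' : IsExpOf (fun p => u • Del' p) φ') :
    φ' (X 3) = X 3 - C u * (X 4 * X 5) ∧
    φ' (X 4) = X 4 ∧
    φ' (X 5) = X 5 ∧
    ∀ j : Fin 3, φ' (X (ι36 j)) ∈ Pset ((j : ℕ) + 1) ((j : ℕ) + 2) ∧
      coeff (tfMon ((j : ℕ) + 1) ((j : ℕ) + 2)) (φ' (X (ι36 j)))
        = (-1 : k) ^ (j : ℕ) * u ^ (2 * ((j : ℕ) + 1)) := by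
  refine ⟨?_, ?_, ?_, ?_⟩
  · have d1 : u • Del' (X 3 : MvPolynomial (Fin 6) k) = -(C u * (X 4 * X 5)) := by
      simp [Del', pderiv_X, smul_eq_C_mul]
      try ring
    have d2 : u • Del' (-(C u * (X 4 * X 5)) : MvPolynomial (Fin 6) k) = 0 := by
      simp [Del', pderiv_X, pderiv_mul, pderiv_C]
    have hN : (fun p => u • Del' p)^[2] (X 3 : MvPolynomial (Fin 6) k) = 0 := by
      show u • Del' (u • Del' (X 3 : MvPolynomial (Fin 6) k)) = 0
      rw [d1, d2]
    have e1 : (fun p => u • Del' p)^[1] (X 3 : MvPolynomial (Fin 6) k)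
        = -(C u * (X 4 * X 5)) := by
      rw [Function.iterate_one]; exact d1
    rw [hφ' _ 2 hN, Finset.sum_range_succ, Finset.sum_range_one, e1]
    norm_num [Nat.factorial]
    ring
  · have hN : (fun p => u • Del' p)^[1] (X 4 : MvPolynomial (Fin 6) k) = 0 := by
      show u • Del' (X 4 : MvPolynomial (Fin 6) k) = 0
      simp [Del', pderiv_X]
    rw [hφ' _ 1 hN, Finset.sum_range_one]
    norm_num [Nat.factorial]
  · have hN : (fun p => u • Del' p)^[1] (X 5 : MvPolynomial (Fin 6) k) = 0 := by
      show u • Del' (X 5 : MvPolynomial (Fin 6) k) = 0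
      simp [Del', pderiv_X]
    rw [hφ' _ 1 hN, Finset.sum_range_one]
    norm_num [Nat.factorial]
  · intro j
    fin_cases j
    · exact ⟨(x0_spec u hu φ' hφ').1, by simpa using (show coeff (tfMon 1 2) (φ' (X (ι36 0))) = u ^ 2 from (x0_spec u hu φ' hφ').2)⟩
    · exact ⟨(x1_spec u hu φ' hφ').1, by simpa using (show coeff (tfMon 2 3) (φ' (X (ι36 1))) = -(u ^ 4) from (x1_spec u hu φ' hφ').2)⟩
    · exact ⟨(x2_spec u hu φ' hφ').1, by simpa using (show coeff (tfMon 3 4) (φ' (X (ι36 2))) = u ^ 6 from (x2_spec u hu φ' hφ').2)⟩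

end YasudaPaper
end
end
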